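/- Fix j ∈ K̄ with j² = ℏ, E = K(j) ⊆ K̄, and σ₂ ∈ Gal(K̄/K) with σ₂(j) = −j. Let X ∈ GL(n, K̄) be such that for every σ ∈ Gal(K̄/E) the matrix X⁻¹·σ(X) is diagonal. Then there exist an invertible matrix P ∈ GL(n, K̄) all of whose entries lie in E, and an invertible diagonal matrix D ∈ GL(n, K̄), such that X = P·D. -/

import Mathlib

open Matrix

set_option maxHeartbeats 1000000
set_option synthInstance.maxHeartbeats 1000000

noncomputable section

/-- `K = ℂ((ℏ))`, the field of formal Laurent series over `ℂ`. -/
abbrev K : Type := LaurentSeries ℂ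

/-- The series variable `ℏ` of `K = ℂ((ℏ))`. -/
def hbar : K := HahnSeries.single (1 : ℤ) (1 : ℂ)

/-- A fixed algebraic closure of `K`. -/
abbrev Kbar : Type := AlgebraicClosure K

/-- `E = K(j)`, the subfield of `K̄` generated over `K` by `j`. -/
abbrev Efield (j : Kbar) : IntermediateField K Kbar :=
  IntermediateField.adjoin K {j}

/-- If `X ∈ GL(n, K̄)` satisfies that `X⁻¹·σ(X)` is diagonal for every
`σ ∈ Gal(K̄/E)` (where `E = K(j)`, `j² = ℏ`), then `X = P·D` with
`P ∈ GL(n, K̄)` having all entries in `E` and `D` an invertible diagonal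
matrix. -/
theorem statement13 (n : ℕ) (j : Kbar)
    (hj : j ^ 2 = algebraMap K Kbar hbar)
    (σ₂ : Kbar ≃ₐ[K] Kbar) (hσ : σ₂ j = -j)
    (X : Matrix (Fin n) (Fin n) Kbar) (hX : IsUnit X)
    (h : ∀ σ : Kbar ≃ₐ[K] Kbar, (∀ x ∈ Efield j, σ x = x) →
      (X⁻¹ * X.map σ).IsDiag) :
    ∃ P D : Matrix (Fin n) (Fin n) Kbar,
      IsUnit P ∧ (∀ a b, P a b ∈ Efield j) ∧
      IsUnit D ∧ D.IsDiag ∧ X = P * D := by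
  classical
  set E := Efield j with hE
  -- key: an element fixed by all automorphisms fixing `E` lies in `E`
  have key : ∀ x : Kbar, (∀ σ : Kbar ≃ₐ[K] Kbar, (∀ y ∈ E, σ y = y) → σ x = x) → x ∈ E := by
    intro x hx
    haveI : CharZero K := charZero_of_injective_algebraMap (algebraMap ℂ K).injective
    haveI : Algebra.IsAlgebraic (↥E) Kbar := Algebra.IsAlgebraic.tower_top (K := K) (↥E)
    haveI : IsAlgClosure (↥E) Kbar := ⟨inferInstance, inferInstance⟩
    haveI : Normal (↥E) Kbar := IsAlgClosure.normal (↥E) Kbar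
    haveI : CharZero (↥E) := charZero_of_injective_algebraMap (algebraMap K (↥E)).injective
    haveI : Algebra.IsSeparable (↥E) Kbar := IsAlgClosure.separable (↥E) Kbar
    haveI : NoZeroSMulDivisors (↥E) Kbar :=
      inferInstance
    by_contra hxE
    have hbot : x ∉ (⊥ : Subalgebra (↥E) Kbar) := by
      intro hb
      rw [Algebra.mem_bot] at hb
      obtain ⟨⟨a, ha⟩, rfl⟩ := hb
      exact hxE ha
    obtain ⟨y, hxy, hconj⟩ := (notMem_iff_exists_ne_and_isConjRoot
      (Algebra.IsSeparable.isSeparable (↥E) x)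
      (IsAlgClosed.splits _)).mp hbot
    obtain ⟨σ, hσx⟩ := hconj.symm.exists_algEquiv
    have hfix : ∀ y ∈ E, (σ.restrictScalars K) y = y := by
      intro z hz
      exact σ.commutes ⟨z, hz⟩
    have hfixed : σ x = x := hx (σ.restrictScalars K) hfix
    exact hxy (hfixed.symm.trans hσx)
  -- handle each column of `X`
  have hcol : ∀ i : Fin n, ∃ k : Fin n, X k i ≠ 0 := by
    intro i
    by_contra hcon
    push_neg at hcon
    have hXi : X.det = 0 := by
      apply Matrix.det_eq_zero_of_column_eq_zero i
      exact hcon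
    have : IsUnit X.det := (Matrix.isUnit_iff_isUnit_det X).mp hX
    rw [hXi] at this
    exact this.ne_zero rfl
  choose k hk using hcol
  set d : Fin n → Kbar := fun i => X (k i) i with hd
  have hdne : ∀ i, d i ≠ 0 := fun i => hk i
  set D : Matrix (Fin n) (Fin n) Kbar := Matrix.diagonal d with hD
  have hDunit : IsUnit D := by
    rw [Matrix.isUnit_iff_isUnit_det, Matrix.det_diagonal]
    exact IsUnit.of_mul_eq_one (∏ i, (d i)⁻¹) (by
      rw [← Finset.prod_mul_distrib]
      exact Finset.prod_eq_one fun i _ => mul_inv_cancel₀ (hdne i))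
  set P : Matrix (Fin n) (Fin n) Kbar := X * Matrix.diagonal (fun i => (d i)⁻¹) with hP
  -- the action of a fixing automorphism on columns
  have haction : ∀ σ : Kbar ≃ₐ[K] Kbar, (∀ x ∈ E, σ x = x) →
      ∀ a i, σ (X a i) = X a i * ((X⁻¹ * X.map σ) i i) := by
    intro σ hσfix a i
    have hdiag := h σ hσfix
    have hXinv : X * X⁻¹ = 1 := Matrix.mul_nonsing_inv X ((Matrix.isUnit_iff_isUnit_det X).mp hX)
    have : X.map σ = X * (X⁻¹ * X.map σ) := by
      rw [← Matrix.mul_assoc, hXinv, Matrix.one_mul]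
    have h2 : X.map σ a i = (X * (X⁻¹ * X.map σ)) a i := by rw [← this]
    rw [Matrix.map_apply] at h2
    rw [h2, Matrix.mul_apply]
    rw [Finset.sum_eq_single i]
    · intro b _ hbi
      rw [hdiag hbi, mul_zero]
    · intro hni
      exact absurd (Finset.mem_univ i) hni
  -- entries of P lie in E
  have hPmem : ∀ a b, P a b ∈ E := by
    intro a i
    apply key
    intro σ hσfix
    have hPab : P a i = X a i * (d i)⁻¹ := by
      rw [hP, Matrix.mul_apply, Finset.sum_eq_single i]
      · rw [Matrix.diagonal_apply_eq]
      · intro b _ hbi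
        rw [Matrix.diagonal_apply_ne _ hbi, mul_zero]
      · intro hni
        exact absurd (Finset.mem_univ i) hni
    have h1 := haction σ hσfix a i
    set δ := (X⁻¹ * X.map σ) i i with hδ
    have h2 : σ (d i) = d i * δ := haction σ hσfix (k i) i
    have hδne : δ ≠ 0 := by
      intro hδ0
      rw [hδ0, mul_zero] at h2
      exact hdne i (σ.injective (by rw [h2, map_zero]))
    rw [hPab, _root_.map_mul, map_inv₀, h1, h2]
    field_simp
  have hPD : X = P * D := by
    rw [hP, hD, Matrix.mul_assoc, Matrix.diagonal_mul_diagonal]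
    have : (fun i => (d i)⁻¹ * d i) = fun _ => (1 : Kbar) := by
      funext i; exact inv_mul_cancel₀ (hdne i)
    rw [this, Matrix.diagonal_one, Matrix.mul_one]
  have hPunit : IsUnit P := by
    have hdet := (Matrix.isUnit_iff_isUnit_det X).mp hX
    rw [hPD, Matrix.det_mul] at hdet
    exact (Matrix.isUnit_iff_isUnit_det P).mpr (isUnit_of_mul_isUnit_left hdet)
  exact ⟨P, D, hPunit, hPmem, hDunit, Matrix.isDiag_diagonal d, hPD⟩
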